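/- Let X be a dg algebra with a special deformation retract (i, p, h) onto Y (pi = 1, ip = 1 + ∂h + h∂, hi = 0, ph = 0, h² = 0) whose homotopy h satisfies the generalized Leibniz rule, and let δ be a small perturbation of ∂^X that itself satisfies the Leibniz rule (so (X, ∂^X + δ) is again a dg algebra with the same product). With i_∞ = i + hAi, p_∞ = p + pAh, h_∞ = h + hAh (A = (1 − δh)^{-1}δ), one has (∂_∞^X h_∞ + h_∞ ∂_∞^X)(i_∞(α)·i_∞(β)) = 0 for all α, β ∈ Y, where ∂_∞^X = ∂^X + δ. -/

import Mathlib

/-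
Perturbed key vanishing lemma: X a dg algebra, (i, p, h) a special
deformation retract of X onto Y whose homotopy h satisfies the generalized
Leibniz rule, δ a small perturbation of dX satisfying the Leibniz rule.
With A = (1-δh)⁻¹δ = g∘δ, i_∞ = i + h∘A∘i and h_∞ = h + h∘A∘h, and
∂_∞^X = dX + δ, one has (∂_∞^X h_∞ + h_∞ ∂_∞^X)(i_∞(α)·i_∞(β)) = 0.
-/

noncomputable def epsMap {R X : Type*} [CommRing R] [AddCommGroup X] [Module R X]
    (A : ℕ → Submodule R X) [DirectSum.Decomposition A] : X →ₗ[R] X :=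
  (DirectSum.toModule R ℕ X fun n => ((-1 : R) ^ n • (A n).subtype)) ∘ₗ
    (DirectSum.decomposeLinearEquiv A).toLinearMap

theorem epsMap_of_mem {R X : Type*} [CommRing R] [AddCommGroup X] [Module R X]
    (A : ℕ → Submodule R X) [DirectSum.Decomposition A]
    {n : ℕ} {x : X} (hx : x ∈ A n) : epsMap A x = (-1 : R) ^ n • x := by
  simp only [epsMap, LinearMap.comp_apply, LinearEquiv.coe_coe,
    DirectSum.decomposeLinearEquiv_apply]
  rw [DirectSum.decompose_of_mem A hx, ← DirectSum.lof_eq_of R, DirectSum.toModule_lof]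
  simp

theorem perturbed_key_vanishing {R X Y : Type*} [CommRing R]
    [AddCommGroup X] [Module R X] [AddCommGroup Y] [Module R Y]
    -- gradings of the complexes X and Y
    (A : ℕ → Submodule R X) (B : ℕ → Submodule R Y)
    [DirectSum.Decomposition A] [DirectSum.Decomposition B]
    -- the differentials
    (dX : X →ₗ[R] X) (dY : Y →ₗ[R] Y)
    (hdX2 : dX ∘ₗ dX = 0) (hdY2 : dY ∘ₗ dY = 0)
    (hdXdeg : ∀ n : ℕ, ∀ x ∈ A (n + 1), dX x ∈ A n)
    (hdX0 : ∀ x ∈ A 0, dX x = 0)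
    (hdYdeg : ∀ n : ℕ, ∀ y ∈ B (n + 1), dY y ∈ B n)
    (hdY0 : ∀ y ∈ B 0, dY y = 0)
    -- the dg algebra structure on X : bilinear, unital, associative product
    -- compatible with the grading and satisfying the Leibniz rule
    (mul : X →ₗ[R] X →ₗ[R] X) (one : X) (hone : one ∈ A 0)
    (hone_l : ∀ x, mul one x = x) (hone_r : ∀ x, mul x one = x)
    (hassoc : ∀ x y z : X, mul (mul x y) z = mul x (mul y z))
    (hmuldeg : ∀ m n : ℕ, ∀ x ∈ A m, ∀ y ∈ A n, mul x y ∈ A (m + n))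
    (hLeib : ∀ m : ℕ, ∀ x ∈ A m, ∀ y : X,
      dX (mul x y) = mul (dX x) y + ((-1 : ℤ) ^ m) • mul x (dX y))
    -- the deformation retract (i, p, h)
    (i : Y →ₗ[R] X) (p : X →ₗ[R] Y) (h : X →ₗ[R] X)
    (hichain : dX ∘ₗ i = i ∘ₗ dY) (hpchain : dY ∘ₗ p = p ∘ₗ dX)
    (hideg : ∀ n : ℕ, ∀ y ∈ B n, i y ∈ A n)
    (hpdeg : ∀ n : ℕ, ∀ x ∈ A n, p x ∈ B n)
    (hhdeg : ∀ n : ℕ, ∀ x ∈ A n, h x ∈ A (n + 1))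
    (hpi : p ∘ₗ i = LinearMap.id)
    (hip : i ∘ₗ p = LinearMap.id + dX ∘ₗ h + h ∘ₗ dX)
    -- h satisfies the generalized Leibniz rule : h(ab) ∈ h(a)·X + X·h(b)
    (hgen : ∀ a b : X, ∃ u v : X, h (mul a b) = mul (h a) u + mul v (h b))
    -- h ∘ i = 0
    (hhi : h ∘ₗ i = 0)
    -- special deformation retract side conditions
    (hph : p ∘ₗ h = 0) (hhh : h ∘ₗ h = 0)
    -- the small perturbation δ : same degree as dX, satisfies the Leibniz
    -- rule (so (X, dX + δ) is again a dg algebra with the same product),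
    -- and (dX + δ)² = 0
    (δ : X →ₗ[R] X)
    (hδdeg : ∀ n : ℕ, ∀ x ∈ A (n + 1), δ x ∈ A n)
    (hδ0 : ∀ x ∈ A 0, δ x = 0)
    (hδLeib : ∀ m : ℕ, ∀ x ∈ A m, ∀ y : X,
      δ (mul x y) = mul (δ x) y + ((-1 : ℤ) ^ m) • mul x (δ y))
    (hperturb : (dX + δ) ∘ₗ (dX + δ) = 0)
    (hnil : ∀ x : X, ∃ N : ℕ, ((δ ∘ₗ h : X →ₗ[R] X) ^ N) x = 0)
    -- g = (1 - δ∘h)⁻¹, so that A = (1-δh)⁻¹δ = g ∘ δ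
    (g : X →ₗ[R] X)
    (hg1 : g ∘ₗ (LinearMap.id - δ ∘ₗ h) = LinearMap.id)
    (hg2 : (LinearMap.id - δ ∘ₗ h) ∘ₗ g = LinearMap.id) :
    ∀ α β : Y,
      (dX + δ) ((h + (h ∘ₗ (g ∘ₗ δ)) ∘ₗ h)
          (mul ((i + (h ∘ₗ (g ∘ₗ δ)) ∘ₗ i) α) ((i + (h ∘ₗ (g ∘ₗ δ)) ∘ₗ i) β)))
        + (h + (h ∘ₗ (g ∘ₗ δ)) ∘ₗ h)
          ((dX + δ)
            (mul ((i + (h ∘ₗ (g ∘ₗ δ)) ∘ₗ i) α) ((i + (h ∘ₗ (g ∘ₗ δ)) ∘ₗ i) β)))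
      = 0 := by
  intro α β
  have hi0 : ∀ y, h (i y) = 0 := fun y => LinearMap.congr_fun hhi y
  have hh0 : ∀ x, h (h x) = 0 := fun x => LinearMap.congr_fun hhh x
  have hdXi : ∀ y, dX (i y) = i (dY y) := fun y => LinearMap.congr_fun hichain y
  have hipx : ∀ x, i (p x) = x + dX (h x) + h (dX x) := by
    intro x
    have := LinearMap.congr_fun hip x
    simpa using this
  have hg2x : ∀ x, g x - δ (h (g x)) = x := by
    intro x
    have := LinearMap.congr_fun hg2 x
    simpa [sub_eq_iff_eq_add] using this
  -- signed Leibniz rule valid for all x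
  have hLeibE : ∀ (d : X →ₗ[R] X),
      (∀ m : ℕ, ∀ x ∈ A m, ∀ y : X,
        d (mul x y) = mul (d x) y + ((-1 : ℤ) ^ m) • mul x (d y)) →
      ∀ x y : X, d (mul x y) = mul (d x) y + mul (epsMap A x) (d y) := by
    intro d hd x y
    induction x using DirectSum.Decomposition.inductionOn A with
    | zero => simp
    | homogeneous xm =>
      rename_i m
      rw [hd m _ xm.2 y, epsMap_of_mem A xm.2, map_smul, LinearMap.smul_apply]
      rw [← Int.cast_smul_eq_zsmul R ((-1 : ℤ) ^ m)]
      push_cast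
      ring_nf
    | add x₁ x₂ ih₁ ih₂ =>
      simp only [map_add, LinearMap.add_apply, ih₁, ih₂]
      abel
  have hepsH : ∀ x : X, h (epsMap A (h x)) = 0 := by
    intro x
    induction x using DirectSum.Decomposition.inductionOn A with
    | zero => simp
    | homogeneous xm =>
      rename_i m
      rw [epsMap_of_mem A (hhdeg m _ xm.2), map_smul, hh0, smul_zero]
    | add x₁ x₂ ih₁ ih₂ => simp only [map_add, ih₁, ih₂, add_zero]
  have hepsI : ∀ y : Y, h (epsMap A (i y)) = 0 := by
    intro y
    induction y using DirectSum.Decomposition.inductionOn B with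
    | zero => simp
    | homogeneous ym =>
      rename_i n
      rw [epsMap_of_mem A (hideg n _ ym.2), map_smul, hi0, smul_zero]
    | add y₁ y₂ ih₁ ih₂ => simp only [map_add, ih₁, ih₂, add_zero]
  -- key : h kills (dX+δ) applied to perturbed images
  have key_hDi : ∀ y : Y, h ((dX + δ) (i y + h (g (δ (i y))))) = 0 := by
    intro y
    set z := g (δ (i y)) with hz
    have h1 : h (dX (i y)) = 0 := by rw [hdXi]; exact hi0 _
    have h2 : h (dX (h z)) = - h z := by
      have e := congrArg h (hipx z)
      rw [hi0, map_add, map_add, hh0, add_zero] at e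
      rw [eq_neg_iff_add_eq_zero, add_comm]
      exact e.symm
    have h3 : δ (h z) = z - δ (i y) := by
      have e : z - δ (h z) = δ (i y) := by rw [hz]; exact hg2x (δ (i y))
      rw [eq_sub_iff_add_eq, ← e]
      abel
    simp only [LinearMap.add_apply, map_add, h1, h2, h3, map_sub]
    abel
  have ha0 : ∀ y : Y, h (i y + h (g (δ (i y)))) = 0 := by
    intro y
    rw [map_add, hi0, hh0, add_zero]
  -- abbreviations
  set a : X := i α + h (g (δ (i α))) with ha
  set b : X := i β + h (g (δ (i β))) with hb
  have h_a : h a = 0 := ha0 α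
  have h_b : h b = 0 := ha0 β
  have h_m : h (mul a b) = 0 := by
    obtain ⟨u, v, huv⟩ := hgen a b
    rw [huv, h_a, h_b, map_zero, map_zero, LinearMap.zero_apply, add_zero]
  have hDa : h ((dX + δ) a) = 0 := key_hDi α
  have hDb : h ((dX + δ) b) = 0 := key_hDi β
  have hEa : h (epsMap A a) = 0 := by
    rw [ha, map_add, map_add, hepsI, hepsH, add_zero]
  have hDm : h ((dX + δ) (mul a b)) = 0 := by
    have split : (dX + δ) (mul a b)
        = mul ((dX + δ) a) b + mul (epsMap A a) ((dX + δ) b) := by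
      simp only [LinearMap.add_apply, hLeibE dX hLeib a b, hLeibE δ hδLeib a b,
        map_add, LinearMap.add_apply]
      abel
    rw [split, map_add]
    obtain ⟨u, v, huv⟩ := hgen ((dX + δ) a) b
    obtain ⟨u', v', huv'⟩ := hgen (epsMap A a) ((dX + δ) b)
    rw [huv, huv', hDa, h_b, hEa, hDb]
    simp
  -- finish
  simp only [LinearMap.add_apply, LinearMap.comp_apply, ← ha, ← hb]
  have hDm' : h (dX ((mul a) b) + δ ((mul a) b)) = 0 := by
    simpa only [LinearMap.add_apply] using hDm
  rw [h_m, hDm']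
  simp
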